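/- arXiv:2504.21010 — 2 statements merged into one kernel-verified Lean document; each statement's English description precedes it below -/
import Mathlib

section
/- Let G be a finite group of order n with identity g₁, and let Θ_G := det((x_{gh⁻¹})_{g,h∈G}) be the group determinant. Then for every g ∈ G with g ≠ g₁, we have D_g Θ_G = 0, where D_g := Σ_{h∈G} x_{g⁻¹h} ∂/∂x_h. -/
open MvPolynomial

section DerivDet

variable {A : Type*} [CommRing A] [Algebra ℂ A]

lemma derivation_finset_prod (D : Derivation ℂ A A) {ι : Type*} [DecidableEq ι]
    (s : Finset ι) (f : ι → A) :
    D (∏ i ∈ s, f i) = ∑ i ∈ s, (∏ j ∈ s.erase i, f j) * D (f i) := by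
  induction s using Finset.induction with
  | empty => simp
  | @insert a s ha ih =>
    have hterm : ∀ i ∈ s, (∏ j ∈ (insert a s).erase i, f j) * D (f i)
        = f a * ((∏ j ∈ s.erase i, f j) * D (f i)) := by
      intro i hi
      rw [Finset.erase_insert_of_ne (show a ≠ i from fun h => by subst h; exact ha hi),
        Finset.prod_insert (fun h => ha (Finset.mem_of_mem_erase h)), mul_assoc]
    rw [Finset.sum_insert ha, Finset.erase_insert ha, Finset.sum_congr rfl hterm,
      Finset.prod_insert ha, D.leibniz, smul_eq_mul, smul_eq_mul, ih, Finset.mul_sum,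
      mul_comm (∏ j ∈ s, f j), add_comm]

lemma derivation_det (D : Derivation ℂ A A) {ι : Type*} [DecidableEq ι] [Fintype ι]
    (M : Matrix ι ι A) :
    D M.det = ∑ i : ι, (M.updateCol i fun r => D (M r i)).det := by
  rw [Matrix.det_apply, map_sum]
  have : ∀ σ : Equiv.Perm ι,
      D (Equiv.Perm.sign σ • ∏ i : ι, M (σ i) i)
        = ∑ i : ι, Equiv.Perm.sign σ •
            ((∏ j ∈ Finset.univ.erase i, M (σ j) j) * D (M (σ i) i)) := by
    intro σ
    rw [Units.smul_def, map_zsmul, derivation_finset_prod, Finset.smul_sum]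
    simp [Units.smul_def]
  rw [Finset.sum_congr rfl fun σ _ => this σ, Finset.sum_comm]
  refine Finset.sum_congr rfl fun i _ => ?_
  rw [Matrix.det_apply]
  refine Finset.sum_congr rfl fun σ _ => ?_
  congr 1
  rw [← Finset.mul_prod_erase Finset.univ _ (Finset.mem_univ i)]
  rw [Matrix.updateCol_self, mul_comm]
  congr 1
  refine Finset.prod_congr rfl fun j hj => ?_
  exact (Matrix.updateCol_ne (Finset.ne_of_mem_erase hj)).symm

end DerivDet

section Main

variable {G : Type*} [Group G] [Fintype G] [DecidableEq G]

/-- `Dop g` as a derivation. -/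
noncomputable def Dder (g : G) : Derivation ℂ (MvPolynomial G ℂ) (MvPolynomial G ℂ) :=
  ∑ h : G, (X (g⁻¹ * h) : MvPolynomial G ℂ) •
    (pderiv h : Derivation ℂ (MvPolynomial G ℂ) (MvPolynomial G ℂ))

omit [DecidableEq G] in
lemma Dder_apply (g : G) (f : MvPolynomial G ℂ) :
    Dder g f = ∑ h : G, X (g⁻¹ * h) * pderiv h f := by
  have h1 := congrFun (map_sum (Derivation.coeFnAddMonoidHom
      (R := ℂ) (A := MvPolynomial G ℂ) (M := MvPolynomial G ℂ)) (fun h : G =>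
      (X (g⁻¹ * h) : MvPolynomial G ℂ) •
        (pderiv h : Derivation ℂ (MvPolynomial G ℂ) (MvPolynomial G ℂ))) Finset.univ) f
  simp only [Finset.sum_apply] at h1
  rw [Dder]
  refine h1.trans (Finset.sum_congr rfl fun h _ => ?_)
  show ((X (g⁻¹ * h) : MvPolynomial G ℂ) •
      (pderiv h : Derivation ℂ (MvPolynomial G ℂ) (MvPolynomial G ℂ))) f = _
  rw [Derivation.smul_apply, smul_eq_mul]

lemma Dder_X (g a : G) : Dder g (X a : MvPolynomial G ℂ) = X (g⁻¹ * a) := by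
  rw [Dder_apply]
  rw [Finset.sum_eq_single a]
  · simp
  · intro h _ hne
    rw [pderiv_X_of_ne (Ne.symm hne), mul_zero]
  · simp

end Main

/-- The Frobenius differential operator `D_g f = ∑_{h ∈ G} x_{g⁻¹ h} ∂f/∂x_h`. -/
noncomputable def Dop {G : Type*} [Group G] [Fintype G] (g : G)
    (f : MvPolynomial G ℂ) : MvPolynomial G ℂ :=
  ∑ h : G, X (g⁻¹ * h) * pderiv h f

/-- The group determinant `Θ_G = det (x_{g h⁻¹})_{g,h ∈ G}`. -/
noncomputable def groupDet (G : Type*) [Group G] [Fintype G] [DecidableEq G] :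
    MvPolynomial G ℂ :=
  Matrix.det (Matrix.of fun g h : G => (X (g * h⁻¹) : MvPolynomial G ℂ))

theorem Dop_groupDet_eq_zero {G : Type*} [Group G] [Fintype G] [DecidableEq G]
    (g : G) (hg : g ≠ 1) : Dop g (groupDet G) = 0 := by
  set M : Matrix G G (MvPolynomial G ℂ) :=
    Matrix.of fun g h : G => (X (g * h⁻¹) : MvPolynomial G ℂ) with hM
  have h1 : Dop g (groupDet G) = Dder g M.det := by
    rw [Dder_apply]; rfl
  rw [h1, derivation_det]
  have h2 : ∀ i : G, (M.updateCol i fun r => Dder g (M r i)).det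
      = ∑ r : G, M.adjugate i r * M (g⁻¹ * r) i := by
    intro i
    have hcol : (fun r => Dder g (M r i)) = fun r => M (g⁻¹ * r) i := by
      funext r
      simp only [hM, Matrix.of_apply, Dder_X, mul_assoc]
    rw [hcol, ← Matrix.cramer_apply, Matrix.cramer_eq_adjugate_mulVec]
    rfl
  rw [Finset.sum_congr rfl fun i _ => h2 i, Finset.sum_comm]
  have h3 : ∀ r : G, ∑ i : G, M.adjugate i r * M (g⁻¹ * r) i = 0 := by
    intro r
    have : ∑ i : G, M.adjugate i r * M (g⁻¹ * r) i
        = (M * M.adjugate) (g⁻¹ * r) r := by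
      rw [Matrix.mul_apply]
      exact Finset.sum_congr rfl fun i _ => mul_comm _ _
    rw [this, Matrix.mul_adjugate, Matrix.smul_apply, Matrix.one_apply_ne, smul_zero]
    intro h
    exact hg (by rwa [mul_eq_right, inv_eq_one] at h)
  rw [Finset.sum_congr rfl fun r _ => h3 r, Finset.sum_const_zero]
end

section
/- Let G be a finite group of order n with identity g₁. Then for every g ∈ G with g ≠ g₁, we have Δ_g Θ_G = 0, where Δ_g := Σ_{h∈G} x_{hg⁻¹} ∂/∂x_h and Θ_G is the group determinant. -/
open MvPolynomial

/-- The Frobenius differential operator `Δ_g f = ∑_{h ∈ G} x_{h g⁻¹} ∂f/∂x_h`. -/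
noncomputable def Delta {G : Type*} [Group G] [Fintype G] (g : G)
    (f : MvPolynomial G ℂ) : MvPolynomial G ℂ :=
  ∑ h : G, X (h * g⁻¹) * pderiv h f

section Aux

variable {G : Type*} [Group G] [Fintype G] [DecidableEq G]

/-- The bundled derivation corresponding to `Delta g`. -/
noncomputable def deltaDeriv (g : G) :
    Derivation ℂ (MvPolynomial G ℂ) (MvPolynomial G ℂ) :=
  mkDerivation ℂ (fun h => X (h * g⁻¹))

lemma deltaDeriv_eq (g : G) (f : MvPolynomial G ℂ) :
    Delta g f = deltaDeriv g f := by
  induction f using MvPolynomial.induction_on with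
  | C a =>
      simp [Delta, deltaDeriv, pderiv_C]
  | add p q hp hq =>
      simp only [Delta, map_add, mul_add, Finset.sum_add_distrib] at *
      rw [hp, hq]
  | mul_X p k hp =>
      have : Delta g (p * X k) = Delta g p * X k + X (k * g⁻¹) * p := by
        simp only [Delta, pderiv_mul, pderiv_X, mul_add, Finset.sum_add_distrib]
        refine congrArg₂ (· + ·) ?_ ?_
        · rw [Finset.sum_mul]
          apply Finset.sum_congr rfl
          intro i _
          ring
        · rw [Finset.sum_eq_single k]
          · simp [mul_comm]
          · intro h _ hhk
            simp [Pi.single_apply, hhk]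
          · simp
      rw [this, hp, Derivation.leibniz]
      rw [smul_eq_mul, smul_eq_mul, show deltaDeriv g (X k) = X (k * g⁻¹) from mkDerivation_X _ _ _]
      ring

/-- Leibniz rule for a derivation applied to a finite product. -/
lemma deriv_prod {n : Type*} [DecidableEq n]
    (D : Derivation ℂ (MvPolynomial G ℂ) (MvPolynomial G ℂ))
    (s : Finset n) (f : n → MvPolynomial G ℂ) :
    D (∏ i ∈ s, f i) = ∑ i ∈ s, (∏ j ∈ s.erase i, f j) * D (f i) := by
  induction s using Finset.induction_on with
  | empty => simp
  | insert a s ha ih =>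
      rw [Finset.prod_insert ha, Derivation.leibniz, smul_eq_mul, smul_eq_mul, ih,
        Finset.sum_insert ha, Finset.erase_insert ha, Finset.mul_sum]
      rw [add_comm]
      congr 1
      · apply Finset.sum_congr rfl
        intro i hi
        have hne : i ≠ a := by rintro rfl; exact ha hi
        rw [Finset.erase_insert_of_ne hne.symm,
          Finset.prod_insert (fun h => ha (Finset.mem_of_mem_erase h))]
        ring

/-- A derivation applied to a determinant: sum over columns of determinants with
one column differentiated. -/
lemma deriv_det {n : Type*} [DecidableEq n] [Fintype n]
    (D : Derivation ℂ (MvPolynomial G ℂ) (MvPolynomial G ℂ))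
    (M : Matrix n n (MvPolynomial G ℂ)) :
    D M.det = ∑ j : n, (M.updateCol j (fun i => D (M i j))).det := by
  rw [Matrix.det_apply, map_sum]
  have key : ∀ σ : Equiv.Perm n,
      D (Equiv.Perm.sign σ • ∏ i, M (σ i) i)
        = ∑ j : n, Equiv.Perm.sign σ •
            ((∏ i ∈ Finset.univ.erase j, M (σ i) i) * D (M (σ j) j)) := by
    intro σ
    rw [Units.smul_def, map_zsmul, deriv_prod D Finset.univ fun i => M (σ i) i,
      Finset.smul_sum]
    simp [Units.smul_def]
  rw [Finset.sum_congr rfl fun σ _ => key σ, Finset.sum_comm]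
  apply Finset.sum_congr rfl
  intro j _
  rw [Matrix.det_apply]
  apply Finset.sum_congr rfl
  intro σ _
  congr 1
  have : ∀ i : n, (M.updateCol j fun i => D (M i j)) (σ i) i
      = if i = j then D (M (σ j) j) else M (σ i) i := by
    intro i
    rw [Matrix.updateCol_apply]
    split <;> simp_all
  rw [Finset.prod_congr rfl fun i _ => this i,
    ← Finset.mul_prod_erase Finset.univ _ (Finset.mem_univ j)]
  simp only [if_pos rfl]
  rw [mul_comm]
  congr 1
  apply Finset.prod_congr rfl
  intro i hi
  rw [if_neg (Finset.ne_of_mem_erase hi)]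

end Aux

theorem Delta_groupDet_eq_zero {G : Type*} [Group G] [Fintype G] [DecidableEq G]
    (g : G) (hg : g ≠ 1) : Delta g (groupDet G) = 0 := by
  rw [deltaDeriv_eq, groupDet, deriv_det]
  apply Finset.sum_eq_zero
  intro b _
  have hcol : ∀ a : G, deltaDeriv g ((Matrix.of fun g h : G => (X (g * h⁻¹) : MvPolynomial G ℂ)) a b)
      = (Matrix.of fun g h : G => (X (g * h⁻¹) : MvPolynomial G ℂ)) a (g * b) := by
    intro a
    simp only [Matrix.of_apply, deltaDeriv, mkDerivation_X]
    congr 1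
    group
  rw [funext hcol]
  exact Matrix.det_updateCol_eq_zero (Ne.symm (by simpa using hg))
end
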